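/- For every assignment problem and preference profile, every random assignment satisfying ex-ante favoring-eagerness-for-remaining-items (ea-FERI) also satisfies sd-Pareto-efficiency (sd-PE). -/

import Mathlib

open Finset

noncomputable section

namespace FeriPaper

/-- A preference profile: `R j o o'` means agent `j` strictly prefers item `o` to `o'`. -/
abbrev Pref (n : ℕ) := Fin n → Fin n → Fin n → Prop

/-- Every agent's preference is a strict linear (total) order on the items. -/
def IsProfile {n : ℕ} (R : Pref n) : Prop :=
  ∀ j : Fin n, IsStrictTotalOrder (Fin n) (R j)

/-- Profiles as a type (for mechanisms). -/
def Profile (n : ℕ) := { R : Pref n // IsProfile R }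

/-- `o` is agent `j`'s most preferred item in the set `S`. -/
def IsTopIn {n : ℕ} (R : Pref n) (j : Fin n) (S : Set (Fin n)) (o : Fin n) : Prop :=
  o ∈ S ∧ ∀ o' ∈ S, o' ≠ o → R j o o'

/-- `Tunion R A r` is the union `T_1(A) ∪ ⋯ ∪ T_r(A)` (so `Tunion R A 0 = ∅`). -/
def Tunion {n : ℕ} (R : Pref n) (A : Equiv.Perm (Fin n)) : ℕ → Set (Fin n)
  | 0 => ∅
  | r + 1 =>
      Tunion R A r ∪
        {o | ∃ j : Fin n, A j ∉ Tunion R A r ∧ IsTopIn R j (Tunion R A r)ᶜ o}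

/-- `Tset R A r` is the set `T_{r+1}(A)` (0-based round index). -/
def Tset {n : ℕ} (R : Pref n) (A : Equiv.Perm (Fin n)) (r : ℕ) : Set (Fin n) :=
  {o | ∃ j : Fin n, A j ∉ Tunion R A r ∧ IsTopIn R j (Tunion R A r)ᶜ o}

/-- Favoring-eagerness-for-remaining-items (FERI). -/
def FERI {n : ℕ} (R : Pref n) (A : Equiv.Perm (Fin n)) : Prop :=
  ∀ r : ℕ, ∀ o ∈ Tset R A r, IsTopIn R (A.symm o) (Tunion R A r)ᶜ o

/-- Pareto efficiency (PE) of a deterministic assignment. -/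
def ParetoEff {n : ℕ} (R : Pref n) (A : Equiv.Perm (Fin n)) : Prop :=
  ¬ ∃ (A' : Equiv.Perm (Fin n)) (N' : Set (Fin n)), N'.Nonempty ∧
      (∀ j ∈ N', R j (A' j) (A j)) ∧ ∀ k, k ∉ N' → A' k = A k

/-- Number of agents receiving their overall first choice. -/
def firstChoiceCount {n : ℕ} (R : Pref n) (A : Equiv.Perm (Fin n)) : ℕ :=
  {j : Fin n | IsTopIn R j Set.univ (A j)}.ncard

/-- First-choice maximality (FCM). -/
def FCM {n : ℕ} (R : Pref n) (A : Equiv.Perm (Fin n)) : Prop :=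
  ¬ ∃ A' : Equiv.Perm (Fin n), firstChoiceCount R A < firstChoiceCount R A'

/-- Rank of item `o` in agent `j`'s preference (1 = most preferred). -/
def rank {n : ℕ} (R : Pref n) (j o : Fin n) : ℕ :=
  {o' : Fin n | R j o' o ∨ o' = o}.ncard

/-- Favoring-higher-ranks (FHR). -/
def FHR {n : ℕ} (R : Pref n) (A : Equiv.Perm (Fin n)) : Prop :=
  ∀ j k : Fin n, rank R j (A j) ≤ rank R k (A j) ∨ rank R k (A k) < rank R k (A j)

/-- Popularity (POP). -/
def POP {n : ℕ} (R : Pref n) (A : Equiv.Perm (Fin n)) : Prop :=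
  ¬ ∃ A' : Equiv.Perm (Fin n),
      {j : Fin n | R j (A j) (A' j)}.ncard < {j : Fin n | R j (A' j) (A j)}.ncard

/-- Signature of a deterministic assignment: `signature R A r` is the number of agents
    assigned their `r`-th ranked item. -/
def signature {n : ℕ} (R : Pref n) (A : Equiv.Perm (Fin n)) (r : ℕ) : ℕ :=
  {j : Fin n | rank R j (A j) = r}.ncard

/-- `x` dominates `y` as signatures. -/
def SigDom (x y : ℕ → ℕ) : Prop :=
  ∃ r : ℕ, y r < x r ∧ ∀ r' < r, y r' ≤ x r'

/-- Rank maximality (RM). -/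
def RM {n : ℕ} (R : Pref n) (A : Equiv.Perm (Fin n)) : Prop :=
  ¬ ∃ A' : Equiv.Perm (Fin n), SigDom (signature R A') (signature R A)

/-- A random assignment: a doubly stochastic matrix. -/
def DoublyStochastic {n : ℕ} (P : Fin n → Fin n → ℝ) : Prop :=
  (∀ j o, 0 ≤ P j o) ∧ (∀ j, ∑ o, P j o = 1) ∧ (∀ o, ∑ j, P j o = 1)

/-- The 0-1 permutation matrix of a deterministic assignment. -/
def permMatrix {n : ℕ} (A : Equiv.Perm (Fin n)) : Fin n → Fin n → ℝ :=
  fun j o => if A j = o then 1 else 0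

/-- Upper contour set of item `o` under the strict preference `pr`. -/
def ucs {n : ℕ} (pr : Fin n → Fin n → Prop) (o : Fin n) : Set (Fin n) :=
  {x | pr x o ∨ x = o}

/-- Total probability mass on the upper contour set of `o`. -/
def upperSum {n : ℕ} (pr : Fin n → Fin n → Prop) (p : Fin n → ℝ) (o : Fin n) : ℝ :=
  ∑ x, (ucs pr o).indicator p x

/-- `p` (weakly) stochastically dominates `q` w.r.t. the strict preference `pr`. -/
def SD {n : ℕ} (pr : Fin n → Fin n → Prop) (p q : Fin n → ℝ) : Prop :=
  ∀ o, upperSum pr q o ≤ upperSum pr p o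

/-- sd-envy-freeness. -/
def sdEF {n : ℕ} (R : Pref n) (P : Fin n → Fin n → ℝ) : Prop :=
  ∀ j k : Fin n, SD (R j) (P j) (P k)

/-- sd-weak-envy-freeness. -/
def sdWEF {n : ℕ} (R : Pref n) (P : Fin n → Fin n → ℝ) : Prop :=
  ∀ j k : Fin n, SD (R j) (P k) (P j) → P j = P k

/-- The common prefix of the preferences of agents `j` and `k`: items all of whose
    (weak) upper contour sets w.r.t. `j` coincide for `j` and `k`. -/
def commonPrefix {n : ℕ} (R : Pref n) (j k : Fin n) : Set (Fin n) :=
  {o | ∀ x ∈ ucs (R j) o, ucs (R j) x = ucs (R k) x}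

/-- Strong equal treatment of equals (SETE). -/
def SETE {n : ℕ} (R : Pref n) (P : Fin n → Fin n → ℝ) : Prop :=
  ∀ j k : Fin n, ∀ o ∈ commonPrefix R j k, P j o = P k o

/-- A random assignment satisfies a property `X` ex post if it is a convex combination
    of (permutation matrices of) deterministic assignments each satisfying `X`. -/
def ExPost {n : ℕ} (X : Equiv.Perm (Fin n) → Prop) (P : Fin n → Fin n → ℝ) : Prop :=
  ∃ w : Equiv.Perm (Fin n) → ℝ, (∀ A, 0 ≤ w A) ∧ (∑ A, w A) = 1 ∧
    (∀ A, w A ≠ 0 → X A) ∧ ∀ j o, P j o = ∑ A, w A * permMatrix A j o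

/-- Ex-ante favoring-higher-ranks (ea-FHR). -/
def EaFHR {n : ℕ} (R : Pref n) (P : Fin n → Fin n → ℝ) : Prop :=
  ∀ j o, 0 < P j o → ∀ k, rank R k o < rank R j o → upperSum (R k) (P k) o = 1

/-- The eating structure for ea-FERI: `(eaState R P r).1 = M_{P,r+1}` and
    `(eaState R P r).2 o = ⋃_{r' ≤ r+1} E_{P,r'}(o)` (1-based indexing on the right). -/
def eaState {n : ℕ} (R : Pref n) (P : Fin n → Fin n → ℝ) :
    ℕ → Set (Fin n) × (Fin n → Set (Fin n))
  | 0 => (Set.univ, fun o => {j | IsTopIn R j Set.univ o})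
  | r + 1 =>
      let prev := eaState R P r
      let M : Set (Fin n) := {o | ∑ k, (prev.2 o).indicator (fun k' => P k' o) k < 1}
      (M, fun o => prev.2 o ∪ {j | IsTopIn R j M o})

/-- `eaM R P r = M_{P,r+1}` (0-based round index). -/
def eaM {n : ℕ} (R : Pref n) (P : Fin n → Fin n → ℝ) (r : ℕ) : Set (Fin n) :=
  (eaState R P r).1

/-- `eaE R P r o = E_{P,r+1}(o)` (0-based round index). -/
def eaE {n : ℕ} (R : Pref n) (P : Fin n → Fin n → ℝ) (r : ℕ) (o : Fin n) : Set (Fin n) :=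
  {j | IsTopIn R j (eaM R P r) o}

/-- Ex-ante FERI (ea-FERI). -/
def EaFERI {n : ℕ} (R : Pref n) (P : Fin n → Fin n → ℝ) : Prop :=
  ∀ r : ℕ, ∀ o ∈ eaM R P r, ∀ j : Fin n, (∃ r' < r, j ∈ eaE R P r' o) →
    upperSum (R j) (P j) o = 1

/-- sd-Pareto-efficiency (sd-PE). -/
def SdPE {n : ℕ} (R : Pref n) (P : Fin n → Fin n → ℝ) : Prop :=
  ¬ ∃ Q : Fin n → Fin n → ℝ, DoublyStochastic Q ∧ Q ≠ P ∧ ∀ j, SD (R j) (Q j) (P j)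

/-- `A` is the output of the adaptive Boston mechanism with priority order `prio`
    (`prio j k` means `j` has higher priority than `k`): in every round, every item that
    receives applicants is assigned to its highest-priority applicant. -/
def ABMOutcome {n : ℕ} (prio : Fin n → Fin n → Prop) (R : Pref n)
    (A : Equiv.Perm (Fin n)) : Prop :=
  ∀ r : ℕ, ∀ o ∈ Tset R A r,
    IsTopIn R (A.symm o) (Tunion R A r)ᶜ o ∧
      ∀ j : Fin n, A j ∉ Tunion R A r → IsTopIn R j (Tunion R A r)ᶜ o →
        j ≠ A.symm o → prio (A.symm o) j

end FeriPaper

namespace FeriPaper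

/-! ### Auxiliary lemmas for the proof of Statement 13 -/

private lemma exists_top {n : ℕ} (R : Pref n) (hR : IsProfile R) (j : Fin n)
    (S : Set (Fin n)) (hS : S.Nonempty) : ∃ o, IsTopIn R j S o := by
  have h := hR j
  have : IsTrans (Fin n) (R j) := h.toIsTrans
  have : IsIrrefl (Fin n) (R j) := h.toIsStrictOrder.toIrrefl
  have hwf : WellFounded (R j) := Finite.wellFounded_of_trans_of_irrefl (R j)
  obtain ⟨m, hm, hmin⟩ := hwf.has_min S hS
  refine ⟨m, hm, fun o' ho' hne => ?_⟩
  rcases @trichotomous (Fin n) (R j) h.toTrichotomous m o' with h1 | h1 | h1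
  · exact h1
  · exact absurd h1.symm hne
  · exact absurd h1 (hmin o' ho')

private lemma asymm_of {n : ℕ} (R : Pref n) (hR : IsProfile R) {j a b : Fin n}
    (hab : R j a b) : ¬ R j b a := by
  intro hba
  have h := hR j
  have : IsTrans (Fin n) (R j) := h.toIsTrans
  have : IsIrrefl (Fin n) (R j) := h.toIsStrictOrder.toIrrefl
  exact irrefl_of (R j) a (trans_of (R j) hab hba)

private lemma ne_of_rel {n : ℕ} (R : Pref n) (hR : IsProfile R) {j a b : Fin n}
    (hab : R j a b) : a ≠ b := by
  rintro rfl
  have h := hR j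
  have : IsIrrefl (Fin n) (R j) := h.toIsStrictOrder.toIrrefl
  exact irrefl_of (R j) a hab

private lemma eaState_succ_fst {n : ℕ} (R : Pref n) (P : Fin n → Fin n → ℝ) (r : ℕ) :
    (eaState R P (r + 1)).1 =
      {o | ∑ k, ((eaState R P r).2 o).indicator (fun k' => P k' o) k < 1} := rfl

private lemma eaState_succ_snd {n : ℕ} (R : Pref n) (P : Fin n → Fin n → ℝ) (r : ℕ)
    (o : Fin n) :
    (eaState R P (r + 1)).2 o =
      (eaState R P r).2 o ∪ {j | IsTopIn R j (eaM R P (r + 1)) o} := rfl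

private lemma mem_eaM_succ {n : ℕ} (R : Pref n) (P : Fin n → Fin n → ℝ) (r : ℕ)
    (o : Fin n) :
    o ∈ eaM R P (r + 1) ↔
      ∑ k, ((eaState R P r).2 o).indicator (fun k' => P k' o) k < 1 := Iff.rfl

private lemma eaU_mono_succ {n : ℕ} (R : Pref n) (P : Fin n → Fin n → ℝ) (r : ℕ)
    (o : Fin n) : (eaState R P r).2 o ⊆ (eaState R P (r + 1)).2 o := by
  rw [eaState_succ_snd]
  exact Set.subset_union_left

private lemma eaU_mono {n : ℕ} (R : Pref n) (P : Fin n → Fin n → ℝ) {r r' : ℕ}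
    (hrr : r ≤ r') (o : Fin n) : (eaState R P r).2 o ⊆ (eaState R P r').2 o := by
  induction r' with
  | zero => simpa [Nat.le_zero.mp hrr] using Set.Subset.rfl
  | succ s ih =>
    rcases Nat.lt_or_ge r (s + 1) with hlt | hge
    · exact (ih (Nat.lt_succ_iff.mp hlt)).trans (eaU_mono_succ R P s o)
    · have : r = s + 1 := le_antisymm hrr hge
      subst this; exact Set.Subset.rfl

private lemma eaM_antitone_succ {n : ℕ} (R : Pref n) (P : Fin n → Fin n → ℝ)
    (hP : DoublyStochastic P) (r : ℕ) : eaM R P (r + 1) ⊆ eaM R P r := by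
  cases r with
  | zero => intro o _; exact Set.mem_univ o
  | succ s =>
    intro o ho
    rw [mem_eaM_succ] at ho ⊢
    refine lt_of_le_of_lt (Finset.sum_le_sum fun k _ => ?_) ho
    exact Set.indicator_le_indicator_of_subset (eaU_mono_succ R P s o)
      (fun k' => hP.1 k' o) k

private lemma eaM_antitone {n : ℕ} (R : Pref n) (P : Fin n → Fin n → ℝ)
    (hP : DoublyStochastic P) {r r' : ℕ} (hrr : r' ≤ r) :
    eaM R P r ⊆ eaM R P r' := by
  induction r with
  | zero => simpa [Nat.le_zero.mp hrr] using Set.Subset.rfl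
  | succ s ih =>
    rcases Nat.lt_or_ge r' (s + 1) with hlt | hge
    · exact (eaM_antitone_succ R P hP s).trans (ih (Nat.lt_succ_iff.mp hlt))
    · have : r' = s + 1 := le_antisymm hrr hge
      subst this; exact Set.Subset.rfl

private lemma mem_eaU_iff {n : ℕ} (R : Pref n) (P : Fin n → Fin n → ℝ) (r : ℕ)
    (o k : Fin n) :
    k ∈ (eaState R P r).2 o ↔ ∃ r' ≤ r, k ∈ eaE R P r' o := by
  induction r with
  | zero =>
    constructor
    · intro hk
      exact ⟨0, le_rfl, hk⟩
    · rintro ⟨r', hr', hk⟩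
      rw [Nat.le_zero.mp hr'] at hk; exact hk
  | succ s ih =>
    rw [eaState_succ_snd]
    constructor
    · intro hk
      rcases hk with hk | hk
      · obtain ⟨r', hr', hk⟩ := ih.mp hk
        exact ⟨r', hr'.trans (Nat.le_succ s), hk⟩
      · exact ⟨s + 1, le_rfl, hk⟩
    · rintro ⟨r', hr', hk⟩
      rcases Nat.lt_or_ge r' (s + 1) with hlt | hge
      · exact Or.inl (ih.mpr ⟨r', Nat.lt_succ_iff.mp hlt, hk⟩)
      · have : r' = s + 1 := le_antisymm hr' hge
        subst this; exact Or.inr hk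

private lemma full_mass_zero {n : ℕ} (pr : Fin n → Fin n → Prop) (p : Fin n → ℝ)
    (hp : ∀ x, 0 ≤ p x) (hsum : ∑ x, p x = 1) {o : Fin n}
    (hfull : upperSum pr p o = 1) : ∀ x, x ∉ ucs pr o → p x = 0 := by
  have hle : ∀ x ∈ Finset.univ, (ucs pr o).indicator p x ≤ p x :=
    fun x _ => Set.indicator_le_self' (fun y _ => hp y) x
  have heq : ∑ x, (ucs pr o).indicator p x = ∑ x, p x := by
    rw [hsum]; exact hfull
  have hall := (Finset.sum_eq_sum_iff_of_le hle).mp heq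
  intro x hx
  have := hall x (Finset.mem_univ x)
  rw [Set.indicator_of_notMem hx] at this
  exact this.symm

private lemma upperSum_diff {n : ℕ} (pr : Fin n → Fin n → Prop) (p q : Fin n → ℝ)
    (o : Fin n) (hpq : ∀ x, pr x o → q x = p x) :
    upperSum pr q o - upperSum pr p o = q o - p o := by
  unfold upperSum
  rw [← Finset.sum_sub_distrib]
  have hterm : ∀ x, (ucs pr o).indicator q x - (ucs pr o).indicator p x =
      if x = o then q o - p o else 0 := by
    intro x
    by_cases hx : x ∈ ucs pr o
    · rw [Set.indicator_of_mem hx, Set.indicator_of_mem hx]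
      by_cases hxo : x = o
      · subst hxo; simp
      · have hrel : pr x o := hx.resolve_right hxo
        rw [hpq x hrel, if_neg hxo, sub_self]
    · have hxo : x ≠ o := by rintro rfl; exact hx (Or.inr rfl)
      rw [Set.indicator_of_notMem hx, Set.indicator_of_notMem hx, if_neg hxo, sub_self]
  rw [Finset.sum_congr rfl fun x _ => hterm x]
  simp

/-- Main induction: every column of an item exhausted by round `r` agrees for `Q` and `P`. -/
private lemma column_eq {n : ℕ} (R : Pref n) (hR : IsProfile R)
    (P : Fin n → Fin n → ℝ) (hP : DoublyStochastic P)
    (Q : Fin n → Fin n → ℝ) (hQ : DoublyStochastic Q)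
    (hsd : ∀ j, SD (R j) (Q j) (P j)) :
    ∀ r : ℕ, ∀ o, o ∉ eaM R P r → ∀ k, Q k o = P k o := by
  intro r
  induction r with
  | zero => intro o ho _; exact absurd (Set.mem_univ o) ho
  | succ s ih =>
    intro o ho k
    by_cases hos : o ∈ eaM R P s
    swap
    · exact ih o hos k
    -- key inequality on the set of agents who have eaten `o`
    have hkey : ∀ k' ∈ (eaState R P s).2 o, P k' o ≤ Q k' o := by
      intro k' hk'
      obtain ⟨r', hr', htop⟩ := (mem_eaU_iff R P s o k').mp hk'
      have hdiff : upperSum (R k') (Q k') o - upperSum (R k') (P k') o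
          = Q k' o - P k' o := by
        refine upperSum_diff (R k') (P k') (Q k') o fun x hx => ?_
        have hxnot : x ∉ eaM R P r' := by
          intro hxM
          exact asymm_of R hR hx (htop.2 x hxM (ne_of_rel R hR hx))
        have hxnot' : x ∉ eaM R P s := fun hxs => hxnot (eaM_antitone R P hP hr' hxs)
        exact ih x hxnot' k'
      have := hsd k' o
      linarith
    -- column sums
    have hPcol : ∑ j, P j o = 1 := hP.2.2 o
    have hQcol : ∑ j, Q j o = 1 := hQ.2.2 o
    have hPind_le : ∀ j ∈ Finset.univ,
        ((eaState R P s).2 o).indicator (fun k' => P k' o) j ≤ P j o :=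
      fun j _ => Set.indicator_le_self' (fun y _ => hP.1 y o) j
    have hPindsum_le : ∑ j, ((eaState R P s).2 o).indicator (fun k' => P k' o) j ≤ 1 := by
      rw [← hPcol]; exact Finset.sum_le_sum hPind_le
    have hPindsum_ge : 1 ≤ ∑ j, ((eaState R P s).2 o).indicator (fun k' => P k' o) j := by
      by_contra hlt
      exact ho ((mem_eaM_succ R P s o).mpr (lt_of_not_ge hlt))
    have hPindsum : ∑ j, ((eaState R P s).2 o).indicator (fun k' => P k' o) j = 1 :=
      le_antisymm hPindsum_le hPindsum_ge
    -- P vanishes off the eaten set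
    have hPzero : ∀ j, j ∉ (eaState R P s).2 o → P j o = 0 := by
      intro j hj
      have heq : ∑ j, ((eaState R P s).2 o).indicator (fun k' => P k' o) j = ∑ j, P j o := by
        rw [hPcol, hPindsum]
      have hall := (Finset.sum_eq_sum_iff_of_le hPind_le).mp heq
      have := hall j (Finset.mem_univ j)
      rw [Set.indicator_of_notMem hj] at this
      exact this.symm
    -- Q-indicator sum comparisons
    have hQind_le : ∀ j ∈ Finset.univ,
        ((eaState R P s).2 o).indicator (fun k' => Q k' o) j ≤ Q j o :=
      fun j _ => Set.indicator_le_self' (fun y _ => hQ.1 y o) j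
    have hQindsum_le : ∑ j, ((eaState R P s).2 o).indicator (fun k' => Q k' o) j ≤ 1 := by
      rw [← hQcol]; exact Finset.sum_le_sum hQind_le
    have hind_mono : ∀ j ∈ Finset.univ,
        ((eaState R P s).2 o).indicator (fun k' => P k' o) j ≤
        ((eaState R P s).2 o).indicator (fun k' => Q k' o) j := by
      intro j _
      by_cases hj : j ∈ (eaState R P s).2 o
      · rw [Set.indicator_of_mem hj, Set.indicator_of_mem hj]
        exact hkey j hj
      · rw [Set.indicator_of_notMem hj, Set.indicator_of_notMem hj]
    have hQindsum : ∑ j, ((eaState R P s).2 o).indicator (fun k' => Q k' o) j = 1 := by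
      have := Finset.sum_le_sum hind_mono
      rw [hPindsum] at this
      exact le_antisymm hQindsum_le this
    -- termwise equality of indicators
    have hindeq := (Finset.sum_eq_sum_iff_of_le hind_mono).mp (by rw [hPindsum, hQindsum])
    -- Q vanishes off the eaten set
    have hQzero : ∀ j, j ∉ (eaState R P s).2 o → Q j o = 0 := by
      intro j hj
      have heq : ∑ j, ((eaState R P s).2 o).indicator (fun k' => Q k' o) j = ∑ j, Q j o := by
        rw [hQcol, hQindsum]
      have hall := (Finset.sum_eq_sum_iff_of_le hQind_le).mp heq
      have := hall j (Finset.mem_univ j)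
      rw [Set.indicator_of_notMem hj] at this
      exact this.symm
    by_cases hk : k ∈ (eaState R P s).2 o
    · have := hindeq k (Finset.mem_univ k)
      rw [Set.indicator_of_mem hk, Set.indicator_of_mem hk] at this
      exact this.symm
    · rw [hQzero k hk, hPzero k hk]

/-- If the eating process stalls at a nonempty set, ea-FERI is violated. -/
private lemma stall_empty {n : ℕ} (R : Pref n) (hR : IsProfile R)
    (P : Fin n → Fin n → ℝ) (hP : DoublyStochastic P) (h : EaFERI R P)
    (r : ℕ) (o : Fin n) (ho : o ∈ eaM R P (r + 1)) (heq : eaM R P (r + 1) = eaM R P r) :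
    False := by
  have hoM : o ∈ eaM R P r := heq ▸ ho
  have hne : (eaM R P r).Nonempty := ⟨o, hoM⟩
  choose top htop using fun k => exists_top R hR k (eaM R P r) hne
  have hfull : ∀ k, upperSum (R k) (P k) (top k) = 1 := by
    intro k
    refine h (r + 1) (top k) ?_ k ⟨r, Nat.lt_succ_self r, htop k⟩
    rw [heq]; exact (htop k).1
  have hzero : ∀ k, top k ≠ o → P k o = 0 := by
    intro k hko
    refine full_mass_zero (R k) (P k) (fun x => hP.1 k x) (hP.2.1 k) (hfull k) o ?_
    rintro (hrel | hrfl)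
    · exact asymm_of R hR hrel ((htop k).2 o hoM (Ne.symm hko))
    · exact hko hrfl.symm
  have hsum : ∑ k, ((eaState R P r).2 o).indicator (fun k' => P k' o) k = ∑ k, P k o := by
    refine Finset.sum_congr rfl fun k _ => ?_
    by_cases hk : k ∈ (eaState R P r).2 o
    · rw [Set.indicator_of_mem hk]
    · rw [Set.indicator_of_notMem hk]
      by_cases hko : top k = o
      · exfalso
        apply hk
        refine (mem_eaU_iff R P r o k).mpr ⟨r, le_rfl, ?_⟩
        show IsTopIn R k (eaM R P r) o
        rw [← hko]; exact htop k
      · exact (hzero k hko).symm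
  have hlt := (mem_eaM_succ R P r o).mp ho
  rw [hsum, hP.2.2 o] at hlt
  exact lt_irrefl 1 hlt

/-- Every item is eventually exhausted. -/
private lemma escape {n : ℕ} (R : Pref n) (hR : IsProfile R)
    (P : Fin n → Fin n → ℝ) (hP : DoublyStochastic P) (h : EaFERI R P) (o : Fin n) :
    ∃ r, o ∉ eaM R P r := by
  by_contra hc
  push_neg at hc
  have hlt : ∀ r, (eaM R P (r + 1)).ncard < (eaM R P r).ncard := by
    intro r
    refine Set.ncard_lt_ncard ?_ (Set.toFinite _)
    refine ⟨eaM_antitone_succ R P hP r, fun hsub => ?_⟩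
    exact stall_empty R hR P hP h r o (hc (r + 1))
      (le_antisymm (eaM_antitone_succ R P hP r) hsub)
  have hbound : ∀ r, (eaM R P r).ncard + r ≤ (eaM R P 0).ncard := by
    intro r
    induction r with
    | zero => simp
    | succ s ih =>
      have := hlt s
      omega
  have := hbound ((eaM R P 0).ncard + 1)
  omega

/-- Every ea-FERI random assignment is sd-Pareto-efficient. -/
theorem eaFERI_implies_sdPE {n : ℕ} (R : Pref n) (hR : IsProfile R)
    (P : Fin n → Fin n → ℝ) (hP : DoublyStochastic P) (h : EaFERI R P) :
    SdPE R P := by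
  rintro ⟨Q, hQ, hQP, hsd⟩
  apply hQP
  funext j o
  obtain ⟨r, hr⟩ := escape R hR P hP h o
  exact column_eq R hR P hP Q hQ hsd r o hr j

end FeriPaper
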